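/- (Invariant functions of momentum and spin.) Let f be a C¹ real-valued function on {(x,p,s) ∈ Γ : p ≠ 0} satisfying {P_a, f} = 0 and {J_ab, f} = 0 for all a,b. Then f depends on phase space only through |p|, (p·s)/|p| and |s|: there exists a function F : ℝ³ → ℝ such that f(x,p,s) = F(|p|, (p·s)/|p|, |s|) for all (x,p,s) with p ≠ 0. -/

import Mathlib

noncomputable section

open Finset

abbrev R3 := Fin 3 → ℝ

/-- The spin phase space Γ = ℝ³ × ℝ³ × ℝ³ with points (x, p, s). -/
abbrev Phase := R3 × R3 × R3

/-- Euclidean dot product on ℝ³. -/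
def dot3 (v w : R3) : ℝ := ∑ a, v a * w a

/-- Euclidean norm on ℝ³. -/
def norm3 (v : R3) : ℝ := Real.sqrt (dot3 v v)

/-- Cross product on ℝ³. -/
def cross3 (v w : R3) : R3 :=
  ![v 1 * w 2 - v 2 * w 1, v 2 * w 0 - v 0 * w 2, v 0 * w 1 - v 1 * w 0]

/-- Kronecker delta. -/
def kdelta (a b : Fin 3) : ℝ := if a = b then 1 else 0

/-- Sign of an integer, valued in ℝ. -/
def isgn (x : ℤ) : ℝ := if 0 < x then 1 else if x < 0 then -1 else 0

/-- Totally antisymmetric symbol on three indices with ε₀₁₂ = +1. -/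
def eps3 (a b c : Fin 3) : ℝ :=
  isgn (((b : ℕ) : ℤ) - ((a : ℕ) : ℤ)) * isgn (((c : ℕ) : ℤ) - ((a : ℕ) : ℤ)) *
  isgn (((c : ℕ) : ℤ) - ((b : ℕ) : ℤ))

/-- Gradient of f with respect to x. -/
def dX (f : Phase → ℝ) (γ : Phase) : R3 := fun a => fderiv ℝ f γ (Pi.single a 1, 0, 0)

/-- Gradient of f with respect to p. -/
def dP (f : Phase → ℝ) (γ : Phase) : R3 := fun a => fderiv ℝ f γ (0, Pi.single a 1, 0)

/-- Gradient of f with respect to s. -/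
def dS (f : Phase → ℝ) (γ : Phase) : R3 := fun a => fderiv ℝ f γ (0, 0, Pi.single a 1)

/-- Poisson bracket {f,g} = ∇ₓf·∇ₚg − ∇ₚf·∇ₓg + s·(∇ₛf × ∇ₛg) on Γ. -/
def pb (f g : Phase → ℝ) (γ : Phase) : ℝ :=
  dot3 (dX f γ) (dP g γ) - dot3 (dP f γ) (dX g γ)
    + dot3 γ.2.2 (cross3 (dS f γ) (dS g γ))

/-- Generator of spatial translations: P_a(x,p,s) = p_a. -/
def Pgen (a : Fin 3) : Phase → ℝ := fun γ => γ.2.1 a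

/-- Generator of rotations: J_ab(x,p,s) = x_a p_b − x_b p_a + ε_{abc} s_c. -/
def Jgen (a b : Fin 3) : Phase → ℝ :=
  fun γ => γ.1 a * γ.2.1 b - γ.1 b * γ.2.1 a + ∑ c, eps3 a b c * γ.2.2 c

/-- The subset of phase space where the momentum is nonzero. -/
def PhaseStar : Set Phase := {γ | γ.2.1 ≠ 0}


-- basic facts
lemma isOpen_PhaseStar : IsOpen PhaseStar := by
  have : PhaseStar = (fun γ : Phase => γ.2.1) ⁻¹' {0}ᶜ := rfl
  rw [this]
  exact (isOpen_compl_singleton).preimage (continuous_snd.comp continuous_id |>.fst)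

lemma dot3_self_nonneg (v : R3) : 0 ≤ dot3 v v := by
  apply Finset.sum_nonneg; intro i _; exact mul_self_nonneg _

lemma dot3_self_pos {v : R3} (hv : v ≠ 0) : 0 < dot3 v v := by
  rcases (dot3_self_nonneg v).lt_or_eq with h | h
  · exact h
  · exfalso; apply hv; funext i
    have h0 : ∀ j ∈ Finset.univ, (0:ℝ) ≤ v j * v j := fun j _ => mul_self_nonneg _
    have := (Finset.sum_eq_zero_iff_of_nonneg h0).1 h.symm i (Finset.mem_univ i)
    have := mul_self_eq_zero.1 this
    simpa using this

lemma ne_zero_of_dot3 {v : R3} (h : dot3 v v ≠ 0) : v ≠ 0 := by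
  intro hv; subst hv; apply h; simp [dot3]

lemma norm3_mul_self (v : R3) : norm3 v * norm3 v = dot3 v v :=
  Real.mul_self_sqrt (dot3_self_nonneg v)

-- coordinate CLMs
def Xc (a : Fin 3) : Phase →L[ℝ] ℝ :=
  (ContinuousLinearMap.proj a).comp (ContinuousLinearMap.fst ℝ R3 (R3 × R3))
def Pc (a : Fin 3) : Phase →L[ℝ] ℝ :=
  (ContinuousLinearMap.proj a).comp
    ((ContinuousLinearMap.fst ℝ R3 R3).comp (ContinuousLinearMap.snd ℝ R3 (R3 × R3)))
def Sc (a : Fin 3) : Phase →L[ℝ] ℝ :=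
  (ContinuousLinearMap.proj a).comp
    ((ContinuousLinearMap.snd ℝ R3 R3).comp (ContinuousLinearMap.snd ℝ R3 (R3 × R3)))

@[simp] lemma Xc_apply (a : Fin 3) (γ : Phase) : Xc a γ = γ.1 a := rfl
@[simp] lemma Pc_apply (a : Fin 3) (γ : Phase) : Pc a γ = γ.2.1 a := rfl
@[simp] lemma Sc_apply (a : Fin 3) (γ : Phase) : Sc a γ = γ.2.2 a := rfl

lemma hasFDerivAt_Pgen (a : Fin 3) (γ : Phase) : HasFDerivAt (Pgen a) (Pc a) γ :=
  (Pc a).hasFDerivAt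

lemma dX_Pgen (a : Fin 3) (γ : Phase) : dX (Pgen a) γ = 0 := by
  funext c
  simp [dX, (hasFDerivAt_Pgen a γ).fderiv, Pc]

lemma dP_Pgen (a : Fin 3) (γ : Phase) : dP (Pgen a) γ = fun c => (Pi.single c (1:ℝ) : R3) a := by
  funext c
  simp [dP, (hasFDerivAt_Pgen a γ).fderiv, Pc]

lemma dS_Pgen (a : Fin 3) (γ : Phase) : dS (Pgen a) γ = 0 := by
  funext c
  simp [dS, (hasFDerivAt_Pgen a γ).fderiv, Pc]

def Jd (a b : Fin 3) (γ : Phase) : Phase →L[ℝ] ℝ :=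
  (γ.1 a • Pc b + γ.2.1 b • Xc a) - (γ.1 b • Pc a + γ.2.1 a • Xc b) + ∑ c, eps3 a b c • Sc c

lemma hasFDerivAt_Jgen (a b : Fin 3) (γ : Phase) : HasFDerivAt (Jgen a b) (Jd a b γ) γ := by
  have h : Jgen a b = fun γ' => Xc a γ' * Pc b γ' - Xc b γ' * Pc a γ' + ∑ c, eps3 a b c * Sc c γ' := by
    funext γ'; simp [Jgen]
  rw [h]
  have h1 := ((Xc a).hasFDerivAt (x := γ)).mul ((Pc b).hasFDerivAt)
  have h2 := ((Xc b).hasFDerivAt (x := γ)).mul ((Pc a).hasFDerivAt)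
  have h3 : HasFDerivAt (fun γ' : Phase => ∑ c, eps3 a b c * Sc c γ')
      (∑ c, eps3 a b c • Sc c) γ :=
    HasFDerivAt.fun_sum (fun c _ => ((Sc c).hasFDerivAt).const_mul (eps3 a b c))
  have := (h1.sub h2).add h3
  exact this

lemma dX_Jgen (a b : Fin 3) (γ : Phase) (c : Fin 3) :
    dX (Jgen a b) γ c = kdelta a c * γ.2.1 b - kdelta b c * γ.2.1 a := by
  simp [dX, (hasFDerivAt_Jgen a b γ).fderiv, Jd, Xc, Pc, Sc, kdelta,
    ContinuousLinearMap.sum_apply, Pi.single_apply, smul_eq_mul, mul_comm]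

lemma dP_Jgen (a b : Fin 3) (γ : Phase) (c : Fin 3) :
    dP (Jgen a b) γ c = γ.1 a * kdelta b c - γ.1 b * kdelta a c := by
  simp [dP, (hasFDerivAt_Jgen a b γ).fderiv, Jd, Xc, Pc, Sc, kdelta,
    ContinuousLinearMap.sum_apply, Pi.single_apply, smul_eq_mul]

lemma dS_Jgen (a b : Fin 3) (γ : Phase) (c : Fin 3) :
    dS (Jgen a b) γ c = eps3 a b c := by
  simp [dS, (hasFDerivAt_Jgen a b γ).fderiv, Jd, Xc, Pc, Sc,
    ContinuousLinearMap.sum_apply, Pi.single_apply, smul_eq_mul]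

lemma decompX (u : R3) :
    ((u, 0, 0) : Phase) = ∑ c, u c • (((Pi.single c 1 : R3), (0:R3), (0:R3)) : Phase) := by
  have hx : (∑ c, u c • (Pi.single c (1:ℝ) : R3)) = u := by
    funext i; simp [Fin.sum_univ_three, Pi.single_apply]
  simp [Fin.sum_univ_three, Prod.smul_mk, Prod.mk_add_mk, Prod.ext_iff]
  simpa [Fin.sum_univ_three] using hx.symm

lemma decompP (v : R3) :
    ((0, v, 0) : Phase) = ∑ c, v c • (((0:R3), (Pi.single c 1 : R3), (0:R3)) : Phase) := by
  have hx : (∑ c, v c • (Pi.single c (1:ℝ) : R3)) = v := by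
    funext i; simp [Fin.sum_univ_three, Pi.single_apply]
  simp [Fin.sum_univ_three, Prod.smul_mk, Prod.mk_add_mk, Prod.ext_iff]
  simpa [Fin.sum_univ_three] using hx.symm

lemma decompS (w : R3) :
    ((0, 0, w) : Phase) = ∑ c, w c • (((0:R3), (0:R3), (Pi.single c 1 : R3)) : Phase) := by
  have hx : (∑ c, w c • (Pi.single c (1:ℝ) : R3)) = w := by
    funext i; simp [Fin.sum_univ_three, Pi.single_apply]
  simp [Fin.sum_univ_three, Prod.smul_mk, Prod.mk_add_mk, Prod.ext_iff]
  simpa [Fin.sum_univ_three] using hx.symm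

/-- Expansion of the differential on a general tangent vector. -/
lemma fderiv_expand (f : Phase → ℝ) (γ : Phase) (u v w : R3) :
    fderiv ℝ f γ (u, v, w) =
      (∑ c, u c * dX f γ c) + (∑ c, v c * dP f γ c) + (∑ c, w c * dS f γ c) := by
  have hsplit : ((u, v, w) : Phase) = (u, 0, 0) + (0, v, 0) + (0, 0, w) := by
    simp [Prod.ext_iff]
  have e1 : ∀ c : Fin 3, (u c • (Pi.single c 1 : R3), (0:R3), (0:R3))
      = u c • (((Pi.single c 1 : R3), (0:R3), (0:R3)) : Phase) := by
    intro c; simp [Prod.ext_iff]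
  have e2 : ∀ c : Fin 3, ((0:R3), v c • (Pi.single c 1 : R3), (0:R3))
      = v c • (((0:R3), (Pi.single c 1 : R3), (0:R3)) : Phase) := by
    intro c; simp [Prod.ext_iff]
  have e3 : ∀ c : Fin 3, ((0:R3), (0:R3), w c • (Pi.single c 1 : R3))
      = w c • (((0:R3), (0:R3), (Pi.single c 1 : R3)) : Phase) := by
    intro c; simp [Prod.ext_iff]
  rw [hsplit, map_add, map_add, decompX u, decompP v, decompS w,
    map_sum, map_sum, map_sum]
  simp only [e1, e2, e3, map_smul]
  simp [dX, dP, dS, smul_eq_mul]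

lemma diff_at (f : Phase → ℝ) (hf : ContDiffOn ℝ 1 f PhaseStar) {γ : Phase}
    (hγ : γ ∈ PhaseStar) : DifferentiableAt ℝ f γ :=
  ((hf.differentiableOn one_ne_zero).differentiableAt (isOpen_PhaseStar.mem_nhds hγ))

lemma dXf_zero (f : Phase → ℝ)
    (h1 : ∀ a : Fin 3, ∀ γ ∈ PhaseStar, pb (Pgen a) f γ = 0)
    {γ : Phase} (hγ : γ ∈ PhaseStar) (a : Fin 3) : dX f γ a = 0 := by
  have h := h1 a γ hγ
  rw [pb, dX_Pgen, dP_Pgen, dS_Pgen] at h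
  fin_cases a <;>
    simp [dot3, cross3, Fin.sum_univ_three, Pi.single_apply] at h ⊢ <;>
    linarith

lemma rotEq (f : Phase → ℝ)
    (h1 : ∀ a : Fin 3, ∀ γ ∈ PhaseStar, pb (Pgen a) f γ = 0)
    (h2 : ∀ a b : Fin 3, ∀ γ ∈ PhaseStar, pb (Jgen a b) f γ = 0)
    {γ : Phase} (hγ : γ ∈ PhaseStar) (a b : Fin 3)
    (hab : (a = 0 ∧ b = 1) ∨ (a = 0 ∧ b = 2) ∨ (a = 1 ∧ b = 2)) :
    γ.2.1 a * dP f γ b - γ.2.1 b * dP f γ a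
      + γ.2.2 a * dS f γ b - γ.2.2 b * dS f γ a = 0 := by
  have h := h2 a b γ hγ
  have hx : ∀ c, dX f γ c = 0 := dXf_zero f h1 hγ
  rw [pb] at h
  simp only [dot3, Fin.sum_univ_three, cross3, Matrix.cons_val_zero, Matrix.cons_val_one,
    Matrix.head_cons, Matrix.cons_val_two, Matrix.tail_cons] at h
  simp only [dX_Jgen, dP_Jgen, dS_Jgen, hx] at h
  rcases hab with ⟨ha, hb⟩ | ⟨ha, hb⟩ | ⟨ha, hb⟩ <;> subst ha <;> subst hb <;>
    norm_num [kdelta, eps3, isgn, Fin.ext_iff] at h ⊢ <;>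
    linarith

/-- Rotation by angle t in the (a,b) coordinate plane. -/
def rotv (a b : Fin 3) (t : ℝ) (v : R3) : R3 := fun i =>
  if i = a then Real.cos t * v a - Real.sin t * v b
  else if i = b then Real.sin t * v a + Real.cos t * v b
  else v i

lemma rotv_zero (a b : Fin 3) (v : R3) : rotv a b 0 v = v := by
  funext i
  by_cases h : i = a <;> by_cases h' : i = b <;> simp [rotv, h, h'] <;>
    exact fun hba => by rw [hba]

lemma rot_dot (a b : Fin 3)
    (hab : (a = 0 ∧ b = 1) ∨ (a = 0 ∧ b = 2) ∨ (a = 1 ∧ b = 2))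
    (t : ℝ) (v w : R3) : dot3 (rotv a b t v) (rotv a b t w) = dot3 v w := by
  have h := Real.sin_sq_add_cos_sq t
  rcases hab with ⟨ha, hb⟩ | ⟨ha, hb⟩ | ⟨ha, hb⟩ <;> subst ha <;> subst hb <;>
    simp [rotv, dot3, Fin.sum_univ_three] <;>
    first
      | linear_combination (v 0 * w 0 + v 1 * w 1) * h
      | linear_combination (v 0 * w 0 + v 2 * w 2) * h
      | linear_combination (v 1 * w 1 + v 2 * w 2) * h

lemma sum_ifpair (a b : Fin 3)
    (hab : (a = 0 ∧ b = 1) ∨ (a = 0 ∧ b = 2) ∨ (a = 1 ∧ b = 2))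
    (u v : ℝ) (X : R3) :
    ∑ c, (if c = a then u else if c = b then v else 0) * X c = u * X a + v * X b := by
  rcases hab with ⟨ha, hb⟩ | ⟨ha, hb⟩ | ⟨ha, hb⟩ <;> subst ha <;> subst hb <;>
    norm_num [Fin.sum_univ_three] <;>
    simp +decide

lemma rotv_a (a b : Fin 3) (t : ℝ) (v : R3) :
    rotv a b t v a = Real.cos t * v a - Real.sin t * v b := by simp [rotv]

lemma rotv_b (a b : Fin 3) (hab : a ≠ b) (t : ℝ) (v : R3) :
    rotv a b t v b = Real.sin t * v a + Real.cos t * v b := by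
  simp [rotv, hab, Ne.symm hab]

lemma hasDerivAt_rotv (a b : Fin 3) (hab : a ≠ b) (v : R3) (τ : ℝ) :
    HasDerivAt (fun τ' => rotv a b τ' v)
      (fun i => if i = a then -(rotv a b τ v b) else if i = b then rotv a b τ v a else 0) τ := by
  rw [hasDerivAt_pi]
  intro i
  by_cases hia : i = a
  · have hfun : (fun τ' => rotv a b τ' v i)
        = fun τ' => Real.cos τ' * v a - Real.sin τ' * v b := by
      funext τ'; simp [rotv, hia]
    rw [hfun]
    simp only [if_pos hia, rotv_b a b hab]
    have := ((Real.hasDerivAt_cos τ).mul_const (v a)).fun_sub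
      ((Real.hasDerivAt_sin τ).mul_const (v b))
    convert this using 1
    ring
  · by_cases hib : i = b
    · have hfun : (fun τ' => rotv a b τ' v i)
          = fun τ' => Real.sin τ' * v a + Real.cos τ' * v b := by
        funext τ'; simp [rotv, hib, hia, Ne.symm hab]
      rw [hfun]
      simp only [if_neg hia, if_pos hib, rotv_a]
      have := ((Real.hasDerivAt_sin τ).mul_const (v a)).fun_add
        ((Real.hasDerivAt_cos τ).mul_const (v b))
      convert this using 1
      ring
    · have hfun : (fun τ' => rotv a b τ' v i) = fun _ => v i := by
        funext τ'; simp [rotv, hia, hib]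
      rw [hfun]
      simp only [if_neg hia, if_neg hib]
      exact hasDerivAt_const τ (v i)

lemma rot_invar (f : Phase → ℝ) (hf : ContDiffOn ℝ 1 f PhaseStar)
    (h1 : ∀ a : Fin 3, ∀ γ ∈ PhaseStar, pb (Pgen a) f γ = 0)
    (h2 : ∀ a b : Fin 3, ∀ γ ∈ PhaseStar, pb (Jgen a b) f γ = 0)
    (a b : Fin 3)
    (hab : (a = 0 ∧ b = 1) ∨ (a = 0 ∧ b = 2) ∨ (a = 1 ∧ b = 2))
    (p s : R3) (hp : p ≠ 0) (t : ℝ) :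
    f (0, rotv a b t p, rotv a b t s) = f (0, p, s) := by
  have hab' : a ≠ b := by
    rcases hab with ⟨ha, hb⟩ | ⟨ha, hb⟩ | ⟨ha, hb⟩ <;> subst ha <;> subst hb <;> decide
  set g : ℝ → ℝ := fun τ => f (0, rotv a b τ p, rotv a b τ s) with hg
  have key : ∀ τ : ℝ, HasDerivAt g 0 τ := by
    intro τ
    have hPne : rotv a b τ p ≠ 0 := by
      apply ne_zero_of_dot3
      rw [rot_dot a b hab]
      exact (dot3_self_pos hp).ne'
    have hmem : (((0:R3), rotv a b τ p, rotv a b τ s) : Phase) ∈ PhaseStar := hPne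
    set dp : R3 := fun i =>
      if i = a then -(rotv a b τ p b) else if i = b then rotv a b τ p a else 0 with hdp
    set ds : R3 := fun i =>
      if i = a then -(rotv a b τ s b) else if i = b then rotv a b τ s a else 0 with hds
    have hc : HasDerivAt (fun τ' => (((0:R3), rotv a b τ' p, rotv a b τ' s) : Phase))
        (((0:R3), dp, ds) : Phase) τ :=
      (hasDerivAt_const τ (0:R3)).prodMk
        ((hasDerivAt_rotv a b hab' p τ).prodMk (hasDerivAt_rotv a b hab' s τ))
    have hfd := (diff_at f hf hmem).hasFDerivAt
    have hcomp := hfd.comp_hasDerivAt τ hc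
    have hval : fderiv ℝ f (((0:R3), rotv a b τ p, rotv a b τ s) : Phase)
        (((0:R3), dp, ds) : Phase) = 0 := by
      rw [fderiv_expand]
      simp only [hdp, hds]
      rw [sum_ifpair a b hab, sum_ifpair a b hab]
      have hre : rotv a b τ p a * dP f (((0:R3), rotv a b τ p, rotv a b τ s) : Phase) b
          - rotv a b τ p b * dP f (((0:R3), rotv a b τ p, rotv a b τ s) : Phase) a
          + rotv a b τ s a * dS f (((0:R3), rotv a b τ p, rotv a b τ s) : Phase) b
          - rotv a b τ s b * dS f (((0:R3), rotv a b τ p, rotv a b τ s) : Phase) a = 0 :=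
        rotEq f h1 h2 hmem a b hab
      have h0 : ∑ c, (0:R3) c * dX f (((0:R3), rotv a b τ p, rotv a b τ s) : Phase) c = 0 := by
        simp
      rw [h0]
      linarith [hre]
    rw [hval] at hcomp
    simpa [Function.comp_def, hg] using hcomp
  have hdiff : Differentiable ℝ g := fun τ => (key τ).differentiableAt
  have hder : ∀ τ, deriv g τ = 0 := fun τ => (key τ).deriv
  have hconst := is_const_of_deriv_eq_zero hdiff hder t 0
  simpa [hg, rotv_zero] using hconst

lemma trans_invar (f : Phase → ℝ) (hf : ContDiffOn ℝ 1 f PhaseStar)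
    (h1 : ∀ a : Fin 3, ∀ γ ∈ PhaseStar, pb (Pgen a) f γ = 0)
    (x p s : R3) (hp : p ≠ 0) : f (x, p, s) = f (0, p, s) := by
  set g : ℝ → ℝ := fun τ => f ((1 - τ) • x, p, s) with hg
  have key : ∀ τ : ℝ, HasDerivAt g 0 τ := by
    intro τ
    have hmem : (((1 - τ) • x, p, s) : Phase) ∈ PhaseStar := hp
    have hc1 : HasDerivAt (fun τ' : ℝ => (1 - τ') • x) ((-1 : ℝ) • x) τ := by
      have : HasDerivAt (fun τ' : ℝ => 1 - τ') (-1 : ℝ) τ := by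
        simpa using (hasDerivAt_const τ (1:ℝ)).fun_sub (hasDerivAt_id τ)
      exact this.smul_const x
    have hc : HasDerivAt (fun τ' : ℝ => ((((1 - τ') • x : R3), p, s) : Phase))
        ((((-1:ℝ) • x : R3), (0:R3), (0:R3)) : Phase) τ :=
      hc1.prodMk ((hasDerivAt_const τ p).prodMk (hasDerivAt_const τ s))
    have hcomp := ((diff_at f hf hmem).hasFDerivAt).comp_hasDerivAt τ hc
    have hval : fderiv ℝ f ((((1 - τ) • x : R3), p, s) : Phase)
        ((((-1:ℝ) • x : R3), (0:R3), (0:R3)) : Phase) = 0 := by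
      rw [fderiv_expand]
      have hdx := dXf_zero f h1 hmem
      simp [hdx]
    rw [hval] at hcomp
    simpa [Function.comp_def, hg] using hcomp
  have hdiff : Differentiable ℝ g := fun τ => (key τ).differentiableAt
  have hder : ∀ τ, deriv g τ = 0 := fun τ => (key τ).deriv
  have hconst := is_const_of_deriv_eq_zero hdiff hder 0 1
  simpa [hg] using hconst

lemma exists_angle (u v : ℝ) :
    ∃ t : ℝ, Real.cos t * u - Real.sin t * v = Real.sqrt (u^2 + v^2) ∧
      Real.sin t * u + Real.cos t * v = 0 := by
  by_cases h : u = 0 ∧ v = 0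
  · exact ⟨0, by simp [h.1, h.2]⟩
  · set z : ℂ := ⟨u, v⟩ with hz
    have hz0 : z ≠ 0 := by
      intro hc
      rw [Complex.ext_iff] at hc
      exact h ⟨hc.1, hc.2⟩
    have habs : ‖z‖ = Real.sqrt (u^2 + v^2) := by
      rw [Complex.norm_def, Complex.normSq_mk]
      ring_nf
    have hA : (0:ℝ) < Real.sqrt (u^2 + v^2) := by
      rw [← habs]
      exact (norm_pos_iff.mpr hz0)
    have hcos : Real.cos z.arg = u / Real.sqrt (u^2 + v^2) := by
      rw [Complex.cos_arg hz0, habs]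
    have hsin : Real.sin z.arg = v / Real.sqrt (u^2 + v^2) := by
      rw [Complex.sin_arg, habs]
    refine ⟨-z.arg, ?_, ?_⟩ <;>
      rw [Real.cos_neg, Real.sin_neg, hcos, hsin] <;>
      field_simp <;>
      first
        | (left; ring)
        | nlinarith [Real.mul_self_sqrt (by positivity : (0:ℝ) ≤ u^2 + v^2)]

theorem statement10 (f : Phase → ℝ) (hf : ContDiffOn ℝ 1 f PhaseStar)
    (h1 : ∀ a : Fin 3, ∀ γ ∈ PhaseStar, pb (Pgen a) f γ = 0)
    (h2 : ∀ a b : Fin 3, ∀ γ ∈ PhaseStar, pb (Jgen a b) f γ = 0) :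
    ∃ F : ℝ → ℝ → ℝ → ℝ, ∀ x p s : R3, p ≠ 0 →
      f (x, p, s) = F (norm3 p) (dot3 p s / norm3 p) (norm3 s) := by
  refine ⟨fun r u m => f (0, ![r, 0, 0], ![u, Real.sqrt (m^2 - u^2), 0]), ?_⟩
  intro x p s hp
  have hppos := dot3_self_pos hp
  set r := norm3 p with hrdef
  have hr : 0 < r := Real.sqrt_pos.2 hppos
  set m := norm3 s with hmdef
  -- stage 1 : rotate in the (0,1) plane to kill p 1
  obtain ⟨t1, ht1a, ht1b⟩ := exists_angle (p 0) (p 1)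
  set P1 := rotv 0 1 t1 p with hP1def
  set S1 := rotv 0 1 t1 s with hS1def
  have pair01 : ((0:Fin 3) = 0 ∧ (1:Fin 3) = 1) ∨ ((0:Fin 3) = 0 ∧ (1:Fin 3) = 2)
      ∨ ((0:Fin 3) = 1 ∧ (1:Fin 3) = 2) := Or.inl ⟨rfl, rfl⟩
  have pair02 : ((0:Fin 3) = 0 ∧ (2:Fin 3) = 1) ∨ ((0:Fin 3) = 0 ∧ (2:Fin 3) = 2)
      ∨ ((0:Fin 3) = 1 ∧ (2:Fin 3) = 2) := Or.inr (Or.inl ⟨rfl, rfl⟩)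
  have pair12 : ((1:Fin 3) = 0 ∧ (2:Fin 3) = 1) ∨ ((1:Fin 3) = 0 ∧ (2:Fin 3) = 2)
      ∨ ((1:Fin 3) = 1 ∧ (2:Fin 3) = 2) := Or.inr (Or.inr ⟨rfl, rfl⟩)
  have hP1dot : dot3 P1 P1 = dot3 p p := by rw [hP1def, rot_dot 0 1 pair01]
  have hP1ne : P1 ≠ 0 := ne_zero_of_dot3 (by rw [hP1dot]; exact hppos.ne')
  have hP1_0 : P1 0 = Real.sqrt (p 0 ^ 2 + p 1 ^ 2) := by
    rw [hP1def, rotv_a]; exact ht1a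
  have hP1_1 : P1 1 = 0 := by
    rw [hP1def, rotv_b 0 1 (by decide)]; exact ht1b
  have hP1_2 : P1 2 = p 2 := by simp [hP1def, rotv, Fin.ext_iff]
  -- stage 2 : rotate in the (0,2) plane to kill p 2
  obtain ⟨t2, ht2a, ht2b⟩ := exists_angle (P1 0) (P1 2)
  set P2 := rotv 0 2 t2 P1 with hP2def
  set S2 := rotv 0 2 t2 S1 with hS2def
  have hP2dot : dot3 P2 P2 = dot3 p p := by
    rw [hP2def, rot_dot 0 2 pair02, hP1dot]
  have hP2ne : P2 ≠ 0 := ne_zero_of_dot3 (by rw [hP2dot]; exact hppos.ne')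
  have hP2_0 : P2 0 = r := by
    rw [hP2def, rotv_a, ht2a, hrdef, norm3]
    congr 1
    rw [hP1_0, hP1_2]
    have hsq := Real.sq_sqrt (show (0:ℝ) ≤ p 0 ^ 2 + p 1 ^ 2 by positivity)
    simp only [dot3, Fin.sum_univ_three]
    nlinarith [hsq]
  have hP2_1 : P2 1 = 0 := by
    rw [hP2def]
    have : rotv 0 2 t2 P1 1 = P1 1 := by simp [rotv, Fin.ext_iff]
    rw [this, hP1_1]
  have hP2_2 : P2 2 = 0 := by
    rw [hP2def, rotv_b 0 2 (by decide)]; exact ht2b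
  have hP2eq : P2 = ![r, 0, 0] := by
    funext i; fin_cases i <;> simp [hP2_0, hP2_1, hP2_2]
  -- stage 3 : rotate in the (1,2) plane (fixes P2) to put s in normal form
  obtain ⟨t3, ht3a, ht3b⟩ := exists_angle (S2 1) (S2 2)
  set P3 := rotv 1 2 t3 P2 with hP3def
  set S3 := rotv 1 2 t3 S2 with hS3def
  have hP3eq : P3 = P2 := by
    funext i
    fin_cases i <;> simp [hP3def, rotv, Fin.ext_iff, hP2_1, hP2_2]
  have hS3_0 : S3 0 = S2 0 := by simp [hS3def, rotv, Fin.ext_iff]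
  have hS3_1 : S3 1 = Real.sqrt (S2 1 ^ 2 + S2 2 ^ 2) := by
    rw [hS3def, rotv_a]; exact ht3a
  have hS3_2 : S3 2 = 0 := by
    rw [hS3def, rotv_b 1 2 (by decide)]; exact ht3b
  -- invariants
  have hds : dot3 S2 S2 = dot3 s s := by
    rw [hS2def, rot_dot 0 2 pair02, hS1def, rot_dot 0 1 pair01]
  have hps : dot3 P2 S2 = dot3 p s := by
    rw [hP2def, hS2def, rot_dot 0 2 pair02, hP1def, hS1def, rot_dot 0 1 pair01]
  have hS2_0 : S2 0 = dot3 p s / r := by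
    have hrs : dot3 P2 S2 = r * S2 0 := by
      rw [hP2eq]; simp [dot3, Fin.sum_univ_three]
    rw [hrs] at hps
    field_simp
    linarith [hps]
  have hmm : m * m = dot3 s s := norm3_mul_self s
  have hS3_1' : S3 1 = Real.sqrt (m ^ 2 - (dot3 p s / r) ^ 2) := by
    rw [hS3_1]
    congr 1
    have hexp : dot3 S2 S2 = S2 0 ^ 2 + S2 1 ^ 2 + S2 2 ^ 2 := by
      simp [dot3, Fin.sum_univ_three]; ring
    have h1 : S2 1 ^ 2 + S2 2 ^ 2 = dot3 s s - S2 0 ^ 2 := by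
      linarith [hexp, hds]
    have h2 : m ^ 2 = dot3 s s := by rw [pow_two, hmm]
    rw [h1, hS2_0, h2]
  have hS3eq : S3 = ![dot3 p s / r, Real.sqrt (m ^ 2 - (dot3 p s / r) ^ 2), 0] := by
    funext i
    fin_cases i <;> simp [hS3_0, hS3_1', hS3_2, hS2_0]
  calc f (x, p, s) = f (0, p, s) := trans_invar f hf h1 x p s hp
    _ = f (0, P1, S1) := (rot_invar f hf h1 h2 0 1 pair01 p s hp t1).symm
    _ = f (0, P2, S2) := (rot_invar f hf h1 h2 0 2 pair02 P1 S1 hP1ne t2).symm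
    _ = f (0, P3, S3) := (rot_invar f hf h1 h2 1 2 pair12 P2 S2 hP2ne t3).symm
    _ = _ := by rw [hP3eq, hP2eq, hS3eq]
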